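/- Let 0 → H → X → E → 0 be a short exact sequence of complex tori (H a subtorus of X, E = X/H). Then the induced sequence of dual tori 0 → E^∨ → X^∨ → H^∨ → 0 is exact. -/

import Mathlib

/-- The dual lattice of a set `S` of periods: antilinear forms `α` with `Im(α γ) ∈ ℤ`
for all `γ ∈ S`. -/
noncomputable def dualLatticeOf (E : Type*) [NormedAddCommGroup E] [NormedSpace ℂ E]
    (S : Set E) : AddSubgroup (E →SL[starRingEnd ℂ] ℂ) where
  carrier := {α | ∀ γ ∈ S, ∃ k : ℤ, (α γ).im = (k : ℝ)}
  zero_mem' := by intro γ _; exact ⟨0, by simp⟩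
  add_mem' := by
    intro a b ha hb γ hγ
    obtain ⟨k, hk⟩ := ha γ hγ
    obtain ⟨l, hl⟩ := hb γ hγ
    exact ⟨k + l, by push_cast [ContinuousLinearMap.add_apply, Complex.add_im, hk, hl]; ring⟩
  neg_mem' := by
    intro a ha γ hγ
    obtain ⟨k, hk⟩ := ha γ hγ
    exact ⟨-k, by push_cast [ContinuousLinearMap.neg_apply, Complex.neg_im, hk]; ring⟩

/-- The subgroup of antilinear forms on `V` vanishing on the subspace `VH`; it is the
space `E^∨ = (V/V_H)^∨` of antilinear forms on the quotient, embedded in `V^∨`. -/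
noncomputable def vanishingOn (V : Type*) [NormedAddCommGroup V] [NormedSpace ℂ V]
    (VH : Submodule ℂ V) : AddSubgroup (V →SL[starRingEnd ℂ] ℂ) where
  carrier := {α | ∀ v ∈ VH, α v = 0}
  zero_mem' := by intro v _; simp
  add_mem' := by intro a b ha hb v hv; simp [ha v hv, hb v hv]
  neg_mem' := by intro a ha v hv; simp [ha v hv]

/-- Restriction of antilinear forms on `V` to the subspace `VH`, as an additive
homomorphism `V^∨ →+ V_H^∨`. -/
noncomputable def restrictForms (V : Type*) [NormedAddCommGroup V] [NormedSpace ℂ V]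
    (VH : Submodule ℂ V) :
    (V →SL[starRingEnd ℂ] ℂ) →+ (VH →SL[starRingEnd ℂ] ℂ) :=
  AddMonoidHom.mk' (fun α => α.comp VH.subtypeL) (by intro a b; ext v; rfl)



noncomputable def realToAntilinearAux {V : Type*} [NormedAddCommGroup V] [NormedSpace ℂ V]
    [FiniteDimensional ℂ V] (f : V →ₗ[ℝ] ℝ) : V →SL[starRingEnd ℂ] ℂ where
  toLinearMap :=
    { toFun := fun v => (-(f (Complex.I • v)) : ℝ) + (f v : ℝ) * Complex.I
      map_add' := by
        intro v w
        simp only [smul_add, map_add]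
        push_cast
        ring
      map_smul' := by
        intro c v
        have h1 : c • v = (c.re : ℝ) • v + (c.im : ℝ) • (Complex.I • v) := by
          match_scalars <;> simp
        have h2 : Complex.I • (c • v) = (-c.im : ℝ) • v + (c.re : ℝ) • (Complex.I • v) := by
          match_scalars <;> simp [Complex.ext_iff]
        rw [h2, h1]
        simp only [map_add, map_smul, smul_eq_mul, RingHom.id_apply]
        rw [show (starRingEnd ℂ) c = (c.re : ℝ) - (c.im : ℝ) * Complex.I by
          simp [Complex.ext_iff]]
        push_cast
        ring_nf
        rw [Complex.I_sq]
        ring }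
  cont := by
    have hf : Continuous f := f.continuous_of_finiteDimensional
    fun_prop

theorem realToAntilinearAux_im {V : Type*} [NormedAddCommGroup V] [NormedSpace ℂ V]
    [FiniteDimensional ℂ V] (f : V →ₗ[ℝ] ℝ) (v : V) : ((realToAntilinearAux f) v).im = f v := by
  simp [realToAntilinearAux]

theorem vanish_of_im_eq_zero {V : Type*} [NormedAddCommGroup V] [NormedSpace ℂ V]
    (VH : Submodule ℂ V) (α : V →SL[starRingEnd ℂ] ℂ)
    (h : ∀ v ∈ VH, (α v).im = 0) : ∀ v ∈ VH, α v = 0 := by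
  intro v hv
  have h2 := h (Complex.I • v) (VH.smul_mem Complex.I hv)
  rw [map_smulₛₗ] at h2
  rw [Complex.conj_I] at h2
  apply Complex.ext
  · simpa using h2
  · simpa using h v hv

theorem exists_antilinear_extension {V : Type*} [NormedAddCommGroup V] [NormedSpace ℂ V]
    [FiniteDimensional ℂ V] (VH : Submodule ℂ V) (β : VH →SL[starRingEnd ℂ] ℂ) :
    ∃ α : V →SL[starRingEnd ℂ] ℂ, ∀ v : VH, α ↑v = β v := by
  let βlin : VH →ₗ[ℂ] ℂ :=
    { toFun := fun v => (starRingEnd ℂ) (β v)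
      map_add' := by intro a b; simp
      map_smul' := by intro c a; simp [map_smulₛₗ] }
  obtain ⟨glin, hglin⟩ := βlin.exists_extend
  refine ⟨⟨{ toFun := fun v => (starRingEnd ℂ) (glin v)
             map_add' := by intro a b; simp
             map_smul' := by intro c a; simp }, ?_⟩, ?_⟩
  · have : Continuous glin := glin.continuous_of_finiteDimensional
    simp only [LinearMap.coe_mk, AddHom.coe_mk]
    exact Complex.continuous_conj.comp this
  · intro v
    have := LinearMap.congr_fun hglin v
    simp only [LinearMap.comp_apply, Submodule.coe_subtype] at this
    simp only [ContinuousLinearMap.coe_mk', LinearMap.coe_mk, AddHom.coe_mk, this]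
    simp [βlin]

theorem exists_integral_extension
    {V : Type*} [NormedAddCommGroup V] [NormedSpace ℂ V] [FiniteDimensional ℂ V]
    (VH : Submodule ℂ V) (Γ : Submodule ℤ V) [DiscreteTopology Γ]
    (hspan : Submodule.span ℝ (Γ : Set V) = ⊤)
    (hΓH : Submodule.span ℝ {v : VH | (v : V) ∈ Γ} = ⊤)
    (g : VH →ₗ[ℝ] ℝ)
    (hg : ∀ v : VH, (v : V) ∈ Γ → ∃ k : ℤ, g v = k) :
    ∃ f : V →ₗ[ℝ] ℝ, (∀ γ ∈ Γ, ∃ k : ℤ, f γ = k) ∧ ∀ v : VH, f ↑v = g v := by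
  haveI : IsZLattice ℝ Γ := ⟨hspan⟩
  haveI : Module.Finite ℤ Γ := ZLattice.module_finite ℝ Γ
  haveI : Module.Free ℤ Γ := ZLattice.module_free ℝ Γ
  set N : Submodule ℤ Γ := (VH.restrictScalars ℤ).comap Γ.subtype with hNdef
  -- the quotient Γ⧸N is torsion-free, hence free, hence projective
  haveI : NoZeroSMulDivisors ℤ (Γ ⧸ N) := by
    constructor
    intro c x h
    rcases eq_or_ne c 0 with hc | hc
    · exact Or.inl hc
    · refine Or.inr ?_
      obtain ⟨y, rfl⟩ := Submodule.Quotient.mk_surjective N x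
      rw [← Submodule.Quotient.mk_smul, Submodule.Quotient.mk_eq_zero] at h
      rw [Submodule.Quotient.mk_eq_zero]
      have h2 : (c : ℂ) • (y : V) ∈ VH := by
        rw [Int.cast_smul_eq_zsmul]
        exact h
      have h3 : ((y : Γ) : V) ∈ VH := by
        have := VH.smul_mem ((c : ℂ)⁻¹) h2
        rwa [inv_smul_smul₀ (by exact_mod_cast hc)] at this
      exact h3
  obtain ⟨s, hs⟩ := Module.projective_lifting_property N.mkQ LinearMap.id
    (Submodule.mkQ_surjective N)
  have hcompl : IsCompl N (LinearMap.range s) := by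
    constructor
    · rw [Submodule.disjoint_def]
      rintro x hxN ⟨y, rfl⟩
      have hy : y = 0 := by
        have := LinearMap.congr_fun hs y
        simp only [LinearMap.comp_apply, LinearMap.id_apply] at this
        rw [← this, Submodule.mkQ_apply, Submodule.Quotient.mk_eq_zero]
        exact hxN
      rw [hy, map_zero]
    · rw [codisjoint_iff, eq_top_iff]
      intro x _
      have hmem : x - s (N.mkQ x) ∈ N := by
        rw [← Submodule.Quotient.mk_eq_zero N]
        have := LinearMap.congr_fun hs (N.mkQ x)
        simp only [LinearMap.comp_apply, LinearMap.id_apply] at this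
        rw [← Submodule.mkQ_apply, map_sub, this, Submodule.mkQ_apply, sub_self]
      have : x = (x - s (N.mkQ x)) + s (N.mkQ x) := by abel
      rw [this]
      exact Submodule.add_mem_sup hmem ⟨N.mkQ x, rfl⟩
  obtain ⟨m, bN⟩ := Submodule.basisOfPid (Module.Free.chooseBasis ℤ Γ) N
  obtain ⟨k, bC⟩ := Submodule.basisOfPid (Module.Free.chooseBasis ℤ Γ) (LinearMap.range s)
  let e := Submodule.prodEquivOfIsCompl N (LinearMap.range s) hcompl
  let bΓ : Module.Basis (Fin m ⊕ Fin k) ℤ Γ := (bN.prod bC).map e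
  let bV : Module.Basis (Fin m ⊕ Fin k) ℝ V := bΓ.ofZLatticeBasis ℝ Γ
  have hbΓinl : ∀ i : Fin m, bΓ (Sum.inl i) = ((bN i : Γ)) := by
    intro i
    simp only [bΓ, Module.Basis.map_apply, Module.Basis.prod_apply, Sum.elim_inl]
    simp [e, Submodule.coe_prodEquivOfIsCompl]
  have hmemΓ : ∀ i, (bV i : V) ∈ Γ := fun i => by
    rw [Module.Basis.ofZLatticeBasis_apply]; exact (bΓ i).2
  have hinl : ∀ i : Fin m, bV (Sum.inl i) = (((bN i : Γ)) : V) := by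
    intro i
    rw [Module.Basis.ofZLatticeBasis_apply, hbΓinl]
  have hinl_VH : ∀ i : Fin m, bV (Sum.inl i) ∈ VH := by
    intro i
    rw [hinl]
    exact (bN i).2
  let val : Fin m ⊕ Fin k → ℝ :=
    Sum.elim (fun i => g ⟨bV (Sum.inl i), hinl_VH i⟩) (fun _ => 0)
  refine ⟨bV.constr ℝ val, ?_, ?_⟩
  · -- integrality on Γ
    intro γ hγ
    let Z : Submodule ℤ V :=
      { carrier := {v | ∃ n : ℤ, (bV.constr ℝ val) v = n}
        zero_mem' := ⟨0, by simp⟩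
        add_mem' := by
          rintro a b ⟨p, hp⟩ ⟨q, hq⟩
          exact ⟨p + q, by rw [map_add, hp, hq]; push_cast; ring⟩
        smul_mem' := by
          rintro c v ⟨p, hp⟩
          refine ⟨c * p, ?_⟩
          rw [← Int.cast_smul_eq_zsmul ℝ, map_smul, hp, smul_eq_mul]
          push_cast; ring }
    have hle : Γ ≤ Z := by
      rw [← bΓ.ofZLatticeBasis_span ℝ]
      refine Submodule.span_le.2 ?_
      rintro _ ⟨i, rfl⟩
      rcases i with i | j
      · obtain ⟨n, hn⟩ := hg ⟨bV (Sum.inl i), hinl_VH i⟩ (hmemΓ (Sum.inl i))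
        exact ⟨n, by rw [Module.Basis.constr_basis]; exact hn⟩
      · exact ⟨0, by rw [Module.Basis.constr_basis]; simp [val]⟩
    exact hle hγ
  · -- agreement with g on VH
    have key : ∀ x : N, (bV.constr ℝ val) ((x : Γ) : V) = g ⟨((x : Γ) : V), x.2⟩ := by
      let F : N →ₗ[ℤ] ℝ :=
        ((bV.constr ℝ val).restrictScalars ℤ) ∘ₗ (Γ.subtype ∘ₗ N.subtype)
      let j : N →ₗ[ℤ] VH :=
        LinearMap.codRestrict (VH.restrictScalars ℤ) (Γ.subtype ∘ₗ N.subtype) (fun x => x.2)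
      let G : N →ₗ[ℤ] ℝ := (g.restrictScalars ℤ) ∘ₗ j
      have hFG : F = G := by
        refine Module.Basis.ext bN ?_
        intro i
        have hF : F (bN i) = (bV.constr ℝ val) (((bN i : Γ)) : V) := rfl
        have hG : G (bN i) = g ⟨((bN i : Γ) : V), (bN i).2⟩ := rfl
        rw [hF, hG]
        have h1 := bV.constr_basis ℝ val (Sum.inl i)
        rw [hinl i] at h1
        rw [h1]
        show g ⟨bV (Sum.inl i), hinl_VH i⟩ = _
        exact congrArg g (Subtype.ext (hinl i))
      intro x
      have := LinearMap.congr_fun hFG x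
      exact this
    have hker : ∀ v : VH, (v : V) ∈ Γ → (bV.constr ℝ val) ↑v = g v := by
      intro v hv
      have := key ⟨⟨↑v, hv⟩, v.2⟩
      simpa using this
    -- now extend from the lattice points to all of VH by ℝ-linearity
    let d : VH →ₗ[ℝ] ℝ :=
      { toFun := fun v => (bV.constr ℝ val) ↑v - g v
        map_add' := by intro a b; simp only [Submodule.coe_add, map_add]; ring
        map_smul' := by
          intro r a
          simp only [SetLike.val_smul_of_tower, map_smul, smul_eq_mul, RingHom.id_apply]
          ring }
    have hd : ∀ v : VH, d v = 0 := by
      have htop : (⊤ : Submodule ℝ VH) ≤ LinearMap.ker d := by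
        rw [← hΓH]
        refine Submodule.span_le.2 ?_
        intro v hv
        simp only [SetLike.mem_coe, LinearMap.mem_ker]
        simp only [d, LinearMap.coe_mk, AddHom.coe_mk]
        rw [hker v hv, sub_self]
      intro v
      exact htop (Submodule.mem_top) 
    intro v
    have := hd v
    simp only [d, LinearMap.coe_mk, AddHom.coe_mk] at this
    linarith

/-- Let `0 → H → X → E → 0` be a short exact sequence of complex tori,
`H = V_H/Γ_H ⊂ X = V/Γ`, `E = X/H`.  Then the dual sequence `0 → E^∨ → X^∨ → H^∨ → 0` is
exact.  Here `X^∨ = V^∨/Γ^∨`, `H^∨ = V_H^∨/Γ_H^∨`, and `E^∨` is realized as the quotient of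
the forms vanishing on `V_H` by those of them lying in `Γ^∨`; the maps are induced by the
inclusion and by restriction of forms.  Exactness: the first map is injective, the second is
surjective, and the image of the first equals the kernel of the second. -/
theorem dual_torus_sequence_exact
    (V : Type*) [NormedAddCommGroup V] [NormedSpace ℂ V] [FiniteDimensional ℂ V]
    (VH : Submodule ℂ V)
    (Γ : Submodule ℤ V) [DiscreteTopology Γ]
    (hspan : Submodule.span ℝ (Γ : Set V) = ⊤)
    (hΓH : Submodule.span ℝ {v : VH | (v : V) ∈ Γ} = ⊤) :
    Function.Injective
      (QuotientAddGroup.map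
        ((dualLatticeOf V (Γ : Set V)).addSubgroupOf (vanishingOn V VH))
        (dualLatticeOf V (Γ : Set V))
        (vanishingOn V VH).subtype
        (by intro x hx; exact hx)) ∧
    Function.Surjective
      (QuotientAddGroup.map
        (dualLatticeOf V (Γ : Set V))
        (dualLatticeOf VH {v : VH | (v : V) ∈ Γ})
        (restrictForms V VH)
        (by intro α hα γ hγ; exact hα _ hγ)) ∧
    AddMonoidHom.range
      (QuotientAddGroup.map
        ((dualLatticeOf V (Γ : Set V)).addSubgroupOf (vanishingOn V VH))
        (dualLatticeOf V (Γ : Set V))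
        (vanishingOn V VH).subtype
        (by intro x hx; exact hx)) =
    AddMonoidHom.ker
      (QuotientAddGroup.map
        (dualLatticeOf V (Γ : Set V))
        (dualLatticeOf VH {v : VH | (v : V) ∈ Γ})
        (restrictForms V VH)
        (by intro α hα γ hγ; exact hα _ hγ)) := by

  refine ⟨?_, ?_, ?_⟩
  · -- injectivity of E^∨ → X^∨
    rw [injective_iff_map_eq_zero]
    intro x
    refine QuotientAddGroup.induction_on x ?_
    intro α hα
    erw [QuotientAddGroup.map_mk] at hα
    rw [QuotientAddGroup.eq_zero_iff] at hα ⊢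
    exact hα
  · -- surjectivity of X^∨ → H^∨
    intro y
    refine QuotientAddGroup.induction_on y ?_
    intro β
    obtain ⟨α, hα⟩ := exists_antilinear_extension VH β
    refine ⟨QuotientAddGroup.mk α, ?_⟩
    erw [QuotientAddGroup.map_mk]
    congr 1
    ext v
    exact hα v
  · -- exactness in the middle
    ext x
    constructor
    · rintro ⟨y, rfl⟩
      obtain ⟨β, rfl⟩ := QuotientAddGroup.mk_surjective y
      erw [AddMonoidHom.mem_ker, QuotientAddGroup.map_mk]
      have hz : restrictForms V VH ((vanishingOn V VH).subtype β) = 0 := by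
        ext v
        exact β.2 v v.2
      rw [hz]
      rfl
    · intro hx
      obtain ⟨α, rfl⟩ := QuotientAddGroup.mk_surjective x
      erw [AddMonoidHom.mem_ker, QuotientAddGroup.map_mk, QuotientAddGroup.eq_zero_iff] at hx
      let g : VH →ₗ[ℝ] ℝ :=
        { toFun := fun v => (α ↑v).im
          map_add' := by intro a b; simp
          map_smul' := by
            intro r a
            simp only [SetLike.val_smul_of_tower, RingHom.id_apply, smul_eq_mul]
            rw [← algebraMap_smul ℂ r (a : V), map_smulₛₗ]
            simp [Complex.conj_ofReal] }
      have hgint : ∀ v : VH, (v : V) ∈ Γ → ∃ k : ℤ, g v = k := by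
        intro v hv
        obtain ⟨k, hk⟩ := hx v hv
        exact ⟨k, hk⟩
      obtain ⟨f, hfint, hfg⟩ := exists_integral_extension VH Γ hspan hΓH g hgint
      set lam := realToAntilinearAux f with hlamdef
      have hlam : lam ∈ dualLatticeOf V (Γ : Set V) := by
        intro γ hγ
        obtain ⟨k, hk⟩ := hfint γ hγ
        exact ⟨k, by rw [hlamdef, realToAntilinearAux_im]; exact hk⟩
      have hvan : (α - lam) ∈ vanishingOn V VH := by
        refine vanish_of_im_eq_zero VH _ ?_
        intro v hv
        have h1 : ((α - lam) v).im = (α v).im - (lam v).im := by simp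
        rw [h1, hlamdef, realToAntilinearAux_im]
        have h2 := hfg ⟨v, hv⟩
        simp only [g, LinearMap.coe_mk, AddHom.coe_mk] at h2
        rw [h2, sub_self]
      refine ⟨QuotientAddGroup.mk (⟨α - lam, hvan⟩ : vanishingOn V VH), ?_⟩
      erw [QuotientAddGroup.map_mk]
      rw [QuotientAddGroup.eq]
      have h3 : -((vanishingOn V VH).subtype ⟨α - lam, hvan⟩) + α = lam := by
        show -(α - lam) + α = lam
        abel
      rw [h3]
      exact hlam
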